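/- Let {g_u}_{u∈G} be a bounded family of elements of a Hilbert space H indexed by a finitely generated abelian group G and let {Φ_N} be a Følner sequence in G. Then for any finite set F ⊆ G, limsup_{N→∞} ‖(1/|Φ_N|) Σ_{u∈Φ_N} g_u‖² ≤ limsup_{N→∞} (1/|F|²) Σ_{v,w∈F} (1/|Φ_N|) Σ_{u∈Φ_N} ⟨g_{u+v}, g_{u+w}⟩. -/

import Mathlib

open MeasureTheory Filter

/-- A Følner sequence of finite subsets of an additive group: translates of `Φ N`
asymptotically almost coincide with `Φ N`. -/
def IsFolner {G : Type*} [AddCommGroup G] [DecidableEq G] (Φ : ℕ → Finset G) : Prop :=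
  (∀ N, (Φ N).Nonempty) ∧
  ∀ g : G, Filter.Tendsto
    (fun N => (((((Φ N).image (fun x => g + x)) \ Φ N) ∪
        (Φ N \ ((Φ N).image (fun x => g + x)))).card : ℝ) / (Φ N).card)
    Filter.atTop (nhds 0)

/-- Average of a family of vectors of norm at most `C` has norm at most `C`. -/
lemma vdc_avg_norm_le {ι : Type*} (s : Finset ι) {H : Type*} [NormedAddCommGroup H]
    [NormedSpace ℝ H] (f : ι → H) {C : ℝ} (hC : 0 ≤ C) (hf : ∀ i ∈ s, ‖f i‖ ≤ C) :
    ‖((s.card : ℝ))⁻¹ • ∑ i ∈ s, f i‖ ≤ C := by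
  rcases s.eq_empty_or_nonempty with rfl | hs
  · simpa using hC
  · have hcard : (0 : ℝ) < s.card := by exact_mod_cast hs.card_pos
    rw [norm_smul, norm_inv, Real.norm_natCast]
    calc ((s.card : ℝ))⁻¹ * ‖∑ i ∈ s, f i‖
        ≤ ((s.card : ℝ))⁻¹ * ∑ i ∈ s, ‖f i‖ := by
          gcongr
          exact norm_sum_le _ _
      _ ≤ ((s.card : ℝ))⁻¹ * ∑ i ∈ s, C := by
          gcongr with i hi
          exact hf i hi
      _ = C := by
          rw [Finset.sum_const, nsmul_eq_mul]
          field_simp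

/-- Difference of sums over two finsets, in terms of the symmetric difference. -/
lemma vdc_sum_sub_sum_norm_le {ι : Type*} [DecidableEq ι] (S T : Finset ι) {H : Type*}
    [NormedAddCommGroup H] (f : ι → H) {C : ℝ} (hf : ∀ i, ‖f i‖ ≤ C) :
    ‖(∑ i ∈ S, f i) - ∑ i ∈ T, f i‖ ≤ C * ((S \ T) ∪ (T \ S)).card := by
  have h1 : ∑ i ∈ S \ (S ∩ T), f i + ∑ i ∈ S ∩ T, f i = ∑ i ∈ S, f i :=
    Finset.sum_sdiff Finset.inter_subset_left
  have h2 : ∑ i ∈ T \ (T ∩ S), f i + ∑ i ∈ T ∩ S, f i = ∑ i ∈ T, f i :=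
    Finset.sum_sdiff Finset.inter_subset_left
  rw [Finset.sdiff_inter_self_left] at h1 h2
  have hST : (∑ i ∈ S, f i) - ∑ i ∈ T, f i
      = (∑ i ∈ S \ T, f i) - ∑ i ∈ T \ S, f i := by
    rw [← h1, ← h2, Finset.inter_comm T S]
    abel
  calc ‖(∑ i ∈ S, f i) - ∑ i ∈ T, f i‖
      = ‖(∑ i ∈ S \ T, f i) - ∑ i ∈ T \ S, f i‖ := by rw [hST]
    _ ≤ ‖∑ i ∈ S \ T, f i‖ + ‖∑ i ∈ T \ S, f i‖ := norm_sub_le _ _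
    _ ≤ (∑ i ∈ S \ T, ‖f i‖) + ∑ i ∈ T \ S, ‖f i‖ :=
        add_le_add (norm_sum_le _ _) (norm_sum_le _ _)
    _ ≤ (∑ _i ∈ S \ T, C) + ∑ _i ∈ T \ S, C :=
        add_le_add (Finset.sum_le_sum fun i _ => hf i)
          (Finset.sum_le_sum fun i _ => hf i)
    _ = C * (((S \ T).card : ℝ) + ((T \ S).card : ℝ)) := by
        simp [Finset.sum_const, nsmul_eq_mul]; ring
    _ = C * ((S \ T) ∪ (T \ S)).card := by
        rw [Finset.card_union_of_disjoint disjoint_sdiff_sdiff]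
        push_cast
        ring

/-- The averaged correlation expression equals the average of `‖h u‖²` where
`h u` is the `F`-average of translates. -/
lemma vdc_corr_eq {G : Type*} [AddCommGroup G] [DecidableEq G]
    {H : Type*} [NormedAddCommGroup H] [InnerProductSpace ℝ H]
    (g : G → H) (Φ : Finset G) (F : Finset G) (hF : F.Nonempty) :
    ((F.card : ℝ) ^ 2)⁻¹ * ∑ v ∈ F, ∑ w ∈ F,
        ((Φ.card : ℝ))⁻¹ * ∑ u ∈ Φ, (inner ℝ (g (u + v)) (g (u + w)) : ℝ)
      = ((Φ.card : ℝ))⁻¹ * ∑ u ∈ Φ, ‖((F.card : ℝ))⁻¹ • ∑ v ∈ F, g (u + v)‖ ^ 2 := by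
  have hk : (0:ℝ) < F.card := by exact_mod_cast hF.card_pos
  have hnormh : ∀ u : G, ‖((F.card : ℝ))⁻¹ • ∑ v ∈ F, g (u + v)‖ ^ 2 =
      ((F.card : ℝ) ^ 2)⁻¹ * ∑ v ∈ F, ∑ w ∈ F, (inner ℝ (g (u + v)) (g (u + w)) : ℝ) := by
    intro u
    rw [← real_inner_self_eq_norm_sq]
    simp only [real_inner_smul_left, real_inner_smul_right, sum_inner, inner_sum,
      Finset.mul_sum]
    field_simp
    ring_nf
    simp [div_eq_mul_inv, real_inner_comm, mul_comm]
  simp_rw [hnormh, ← Finset.mul_sum]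
  rw [Finset.sum_comm]
  rw [Finset.sum_congr rfl (fun v _ => Finset.sum_comm)]
  conv_lhs => rw [Finset.sum_comm]
  rw [Finset.sum_congr rfl (fun y _ => Finset.sum_comm)]
  ring

/-- The squared norm of the double average is at most the averaged correlations. -/
lemma vdc_step2 {G : Type*} [AddCommGroup G] [DecidableEq G]
    {H : Type*} [NormedAddCommGroup H] [InnerProductSpace ℝ H]
    (g : G → H) (Φ : Finset G) (F : Finset G) (hF : F.Nonempty) :
    ‖((Φ.card : ℝ))⁻¹ • ∑ u ∈ Φ, ((F.card : ℝ))⁻¹ • ∑ v ∈ F, g (u + v)‖ ^ 2 ≤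
      ((F.card : ℝ) ^ 2)⁻¹ * ∑ v ∈ F, ∑ w ∈ F,
        ((Φ.card : ℝ))⁻¹ * ∑ u ∈ Φ, (inner ℝ (g (u + v)) (g (u + w)) : ℝ) := by
  rw [vdc_corr_eq g Φ F hF]
  set h : G → H := fun u => ((F.card : ℝ))⁻¹ • ∑ v ∈ F, g (u + v) with hh
  rcases Φ.eq_empty_or_nonempty with rfl | hΦ
  · simp
  have hn : (0:ℝ) < Φ.card := by exact_mod_cast hΦ.card_pos
  have h1 : ‖((Φ.card : ℝ))⁻¹ • ∑ u ∈ Φ, h u‖ ≤ ((Φ.card : ℝ))⁻¹ * ∑ u ∈ Φ, ‖h u‖ := by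
    rw [norm_smul, norm_inv, Real.norm_natCast]
    gcongr
    exact norm_sum_le _ _
  calc ‖((Φ.card : ℝ))⁻¹ • ∑ u ∈ Φ, h u‖ ^ 2
      ≤ (((Φ.card : ℝ))⁻¹ * ∑ u ∈ Φ, ‖h u‖) ^ 2 := by
        apply pow_le_pow_left₀ (norm_nonneg _) h1
    _ = (((Φ.card : ℝ))⁻¹) ^ 2 * (∑ u ∈ Φ, ‖h u‖) ^ 2 := by ring
    _ ≤ (((Φ.card : ℝ))⁻¹) ^ 2 * ((Φ.card : ℝ) * ∑ u ∈ Φ, ‖h u‖ ^ 2) := by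
        gcongr
        exact sq_sum_le_card_mul_sum_sq
    _ = ((Φ.card : ℝ))⁻¹ * ∑ u ∈ Φ, ‖h u‖ ^ 2 := by
        field_simp

/-- The double average is close to the plain average, in terms of Følner quotients. -/
lemma vdc_step3 {G : Type*} [AddCommGroup G] [DecidableEq G]
    {H : Type*} [NormedAddCommGroup H] [NormedSpace ℝ H]
    (g : G → H) {C : ℝ} (hC : ∀ u, ‖g u‖ ≤ C)
    (Φ : Finset G) (F : Finset G) (hF : F.Nonempty) :
    ‖(((Φ.card : ℝ))⁻¹ • ∑ u ∈ Φ, ((F.card : ℝ))⁻¹ • ∑ v ∈ F, g (u + v)) -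
        ((Φ.card : ℝ))⁻¹ • ∑ u ∈ Φ, g u‖ ≤
      ((F.card : ℝ))⁻¹ * ∑ v ∈ F, C *
        ((((Φ.image (fun x => v + x)) \ Φ ∪ (Φ \ Φ.image (fun x => v + x))).card : ℝ) /
          (Φ.card : ℝ)) := by
  have hk : (0:ℝ) < F.card := by exact_mod_cast hF.card_pos
  have e1 : ∑ u ∈ Φ, ((F.card : ℝ))⁻¹ • ∑ v ∈ F, g (u + v)
      = ((F.card : ℝ))⁻¹ • ∑ v ∈ F, ∑ u ∈ Φ, g (u + v) := by
    rw [← Finset.smul_sum, Finset.sum_comm]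
  have hBA : (((Φ.card : ℝ))⁻¹ • ∑ u ∈ Φ, ((F.card : ℝ))⁻¹ • ∑ v ∈ F, g (u + v)) -
        ((Φ.card : ℝ))⁻¹ • ∑ u ∈ Φ, g u
      = ((F.card : ℝ))⁻¹ • ∑ v ∈ F,
          (((Φ.card : ℝ))⁻¹ • ((∑ u ∈ Φ, g (u + v)) - ∑ u ∈ Φ, g u)) := by
    have e2 : ∑ v ∈ F, (((Φ.card : ℝ))⁻¹ • ((∑ u ∈ Φ, g (u + v)) - ∑ u ∈ Φ, g u))
        = ((Φ.card : ℝ))⁻¹ • ((∑ v ∈ F, ∑ u ∈ Φ, g (u + v)) - F.card • ∑ u ∈ Φ, g u) := by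
      rw [← Finset.smul_sum, Finset.sum_sub_distrib, Finset.sum_const]
    rw [e1, e2, ← Nat.cast_smul_eq_nsmul ℝ]
    match_scalars <;> field_simp <;> ring
  rw [hBA, norm_smul, norm_inv, Real.norm_natCast]
  gcongr ((F.card : ℝ))⁻¹ * ?_
  calc ‖∑ v ∈ F, (((Φ.card : ℝ))⁻¹ • ((∑ u ∈ Φ, g (u + v)) - ∑ u ∈ Φ, g u))‖
      ≤ ∑ v ∈ F, ‖((Φ.card : ℝ))⁻¹ • ((∑ u ∈ Φ, g (u + v)) - ∑ u ∈ Φ, g u)‖ :=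
        norm_sum_le _ _
    _ ≤ ∑ v ∈ F, C * ((((Φ.image (fun x => v + x)) \ Φ ∪
          (Φ \ Φ.image (fun x => v + x))).card : ℝ) / (Φ.card : ℝ)) := by
        apply Finset.sum_le_sum
        intro v _
        rw [norm_smul, norm_inv, Real.norm_natCast]
        have himg : ∑ u ∈ Φ, g (u + v) = ∑ x ∈ Φ.image (fun x => v + x), g x := by
          rw [Finset.sum_image (fun a _ b _ hab => add_left_cancel hab)]
          exact Finset.sum_congr rfl fun u _ => by rw [add_comm]
        rw [himg, div_eq_mul_inv, mul_comm ((Φ.card : ℝ))⁻¹, ← mul_assoc]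
        gcongr
        exact vdc_sum_sub_sum_norm_le _ _ g hC

/-- A van der Corput-type estimate: for a bounded family `{g_u}` in a Hilbert space
indexed by a finitely generated abelian group, a Følner sequence `{Φ_N}` and a finite
nonempty set `F`, the limsup of `‖avg‖²` is controlled by averaged correlations. -/
theorem van_der_corput_finite_set
    {G : Type*} [AddCommGroup G] [AddGroup.FG G] [DecidableEq G]
    {H : Type*} [NormedAddCommGroup H] [InnerProductSpace ℝ H] [CompleteSpace H]
    (g : G → H) (hg : ∃ C, ∀ u, ‖g u‖ ≤ C)
    (Φ : ℕ → Finset G) (hΦ : IsFolner Φ)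
    (F : Finset G) (hF : F.Nonempty) :
    Filter.limsup
        (fun N => ‖((Φ N).card : ℝ)⁻¹ • ∑ u ∈ Φ N, g u‖ ^ 2) Filter.atTop ≤
      Filter.limsup
        (fun N => ((F.card : ℝ) ^ 2)⁻¹ * ∑ v ∈ F, ∑ w ∈ F,
          ((Φ N).card : ℝ)⁻¹ * ∑ u ∈ Φ N, (inner ℝ (g (u + v)) (g (u + w)) : ℝ))
        Filter.atTop := by
  classical
  obtain ⟨C0, hC0⟩ := hg
  set C : ℝ := max C0 0 with hCdef
  have hC : ∀ u, ‖g u‖ ≤ C := fun u => (hC0 u).trans (le_max_left _ _)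
  have hCnn : (0:ℝ) ≤ C := le_max_right _ _
  obtain ⟨hne, hfol⟩ := hΦ
  have hk : (0:ℝ) < F.card := by exact_mod_cast hF.card_pos
  set A : ℕ → H := fun N => ((Φ N).card : ℝ)⁻¹ • ∑ u ∈ Φ N, g u with hA
  set B : ℕ → H := fun N =>
    ((Φ N).card : ℝ)⁻¹ • ∑ u ∈ Φ N, ((F.card : ℝ))⁻¹ • ∑ v ∈ F, g (u + v) with hB
  set fR : ℕ → ℝ := fun N => ((F.card : ℝ) ^ 2)⁻¹ * ∑ v ∈ F, ∑ w ∈ F,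
      ((Φ N).card : ℝ)⁻¹ * ∑ u ∈ Φ N, (inner ℝ (g (u + v)) (g (u + w)) : ℝ) with hfR
  have hhC : ∀ u : G, ‖((F.card : ℝ))⁻¹ • ∑ v ∈ F, g (u + v)‖ ≤ C := fun u =>
    vdc_avg_norm_le F _ hCnn fun v _ => hC _
  have hAC : ∀ N, ‖A N‖ ≤ C := fun N => vdc_avg_norm_le _ _ hCnn fun u _ => hC u
  have hBC : ∀ N, ‖B N‖ ≤ C := fun N => vdc_avg_norm_le _ _ hCnn fun u _ => hhC u
  have hB2 : ∀ N, ‖B N‖ ^ 2 ≤ fR N := fun N => vdc_step2 g (Φ N) F hF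
  -- the error term tends to zero
  have hd : ∀ N, ‖B N - A N‖ ≤ ((F.card : ℝ))⁻¹ * ∑ v ∈ F, C *
      (((((Φ N).image (fun x => v + x)) \ Φ N ∪
        (Φ N \ (Φ N).image (fun x => v + x))).card : ℝ) / ((Φ N).card : ℝ)) :=
    fun N => vdc_step3 g hC (Φ N) F hF
  have hε : Tendsto (fun N => ((F.card : ℝ))⁻¹ * ∑ v ∈ F, C *
      (((((Φ N).image (fun x => v + x)) \ Φ N ∪
        (Φ N \ (Φ N).image (fun x => v + x))).card : ℝ) / ((Φ N).card : ℝ)))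
      atTop (nhds 0) := by
    have h1 := tendsto_finset_sum (f := fun (v : G) (N : ℕ) => C *
        (((((Φ N).image (fun x => v + x)) \ Φ N ∪
          (Φ N \ (Φ N).image (fun x => v + x))).card : ℝ) / ((Φ N).card : ℝ)))
        (x := atTop) (a := fun _ => (0:ℝ)) F (fun v _ => by
          simpa using (hfol v).const_mul C)
    simpa using (h1.const_mul ((F.card : ℝ))⁻¹)
  have hdiff0 : Tendsto (fun N => ‖B N - A N‖) atTop (nhds 0) :=
    squeeze_zero (fun N => norm_nonneg _) hd hε
  have hkey : ∀ N, ‖A N‖ ^ 2 ≤ fR N + 2 * C * ‖B N - A N‖ := by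
    intro N
    have h1 : ‖A N‖ - ‖B N‖ ≤ ‖A N - B N‖ := norm_sub_norm_le _ _
    have h2 : ‖A N - B N‖ = ‖B N - A N‖ := norm_sub_rev _ _
    have h3 := hB2 N
    have h4 := hAC N
    have h5 := hBC N
    nlinarith [norm_nonneg (A N), norm_nonneg (B N), norm_nonneg (B N - A N),
      mul_le_mul_of_nonneg_right h1 (by positivity : (0:ℝ) ≤ ‖A N‖ + ‖B N‖),
      mul_le_mul_of_nonneg_left (add_le_add h4 h5) (norm_nonneg (B N - A N))]
  -- boundedness of the correlation sequence
  have hfR0 : ∀ N, (0:ℝ) ≤ fR N := by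
    intro N
    rw [hfR]
    simp only
    rw [vdc_corr_eq g (Φ N) F hF]
    positivity
  have hfRle : ∀ N, fR N ≤ C ^ 2 := by
    intro N
    have hn : (0:ℝ) < (Φ N).card := by exact_mod_cast (hne N).card_pos
    rw [hfR]
    simp only
    rw [vdc_corr_eq g (Φ N) F hF]
    calc ((Φ N).card : ℝ)⁻¹ * ∑ u ∈ Φ N, ‖((F.card : ℝ))⁻¹ • ∑ v ∈ F, g (u + v)‖ ^ 2
        ≤ ((Φ N).card : ℝ)⁻¹ * ∑ _u ∈ Φ N, C ^ 2 := by
          gcongr with u hu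
          exact hhC u
      _ = C ^ 2 := by
          rw [Finset.sum_const, nsmul_eq_mul]
          field_simp
  -- conclude
  show Filter.limsup (fun N => ‖A N‖ ^ 2) Filter.atTop ≤ Filter.limsup fR Filter.atTop
  apply le_of_forall_pos_le_add
  intro δ hδ
  have h2C : Tendsto (fun N => 2 * C * ‖B N - A N‖) atTop (nhds 0) := by
    simpa using hdiff0.const_mul (2 * C)
  have hevε : ∀ᶠ N in atTop, 2 * C * ‖B N - A N‖ < δ :=
    h2C.eventually_lt_const hδ
  have hev : ∀ᶠ N in atTop, ‖A N‖ ^ 2 ≤ fR N + δ :=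
    hevε.mono fun N h => (hkey N).trans (by linarith)
  have hcobA : Filter.IsCoboundedUnder (· ≤ ·) atTop (fun N => ‖A N‖ ^ 2) :=
    isCoboundedUnder_le_of_le atTop (x := 0) fun N => by positivity
  have hbdd : Filter.IsBoundedUnder (· ≤ ·) atTop (fun N => fR N + δ) :=
    Filter.isBoundedUnder_of ⟨C ^ 2 + δ, fun N => add_le_add_left (hfRle N) δ⟩
  have hbddR : Filter.IsBoundedUnder (· ≤ ·) atTop fR :=
    Filter.isBoundedUnder_of ⟨C ^ 2, fun N => hfRle N⟩
  have hcobR : Filter.IsCoboundedUnder (· ≤ ·) atTop fR :=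
    isCoboundedUnder_le_of_le atTop (x := 0) fun N => hfR0 N
  calc Filter.limsup (fun N => ‖A N‖ ^ 2) Filter.atTop
      ≤ Filter.limsup (fun N => fR N + δ) Filter.atTop :=
        Filter.limsup_le_limsup hev hcobA hbdd
    _ = Filter.limsup fR Filter.atTop + δ :=
        limsup_add_const atTop fR δ hbddR hcobR
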